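/- The isentropic vortex satisfies the steady continuity equation: with the fields ρ, u, v defined below, at every point (x,y) ∈ ℝ² one has ∂_x(ρ u) + ∂_y(ρ v) = 0. -/

import Mathlib

open Real

/-- Squared distance from the vortex center `(5,5)`. -/
noncomputable def vortexR2 (x y : ℝ) : ℝ := (x - 5)^2 + (y - 5)^2

/-- Temperature perturbation `δT` of the isentropic (Hu–Shu) vortex. -/
noncomputable def vortexDT (γ ε x y : ℝ) : ℝ :=
  -((γ - 1) * ε^2 / (8 * γ * π^2)) *            exp (1 - vortexR2 x y)

/-- Density `ρ = (1+δT)^{1/(γ−1)}` of the isentropic vortex. -/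
noncomputable def vortexRho (γ ε x y : ℝ) : ℝ :=
  (1 + vortexDT γ ε x y) ^ (1 / (γ - 1))

/-- `x`-velocity `u` of the isentropic vortex. -/
noncomputable def vortexU (ε x y : ℝ) : ℝ :=
  -(ε / (2 * π)) * exp ((1 - vortexR2 x y) / 2) * (y - 5)

/-- `y`-velocity `v` of the isentropic vortex. -/
noncomputable def vortexV (ε x y : ℝ) : ℝ :=
  (ε / (2 * π)) * exp ((1 - vortexR2 x y) / 2) * (x - 5)

lemma vortex_aux_hasDerivAt (k c s : ℝ) (h : (1 - k * exp s) ≠ 0) :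
    HasDerivAt (fun t => (1 - k * exp t) ^ c * exp (t / 2))
      ((c * (1 - k * exp s) ^ (c - 1)) * (-(k * exp s)) * exp (s / 2)
        + (1 - k * exp s) ^ c * (exp (s / 2) * (1 / 2))) s := by
  have h1 : HasDerivAt (fun t => 1 - k * exp t) (-(k * exp s)) s := by
    simpa using ((Real.hasDerivAt_exp s).const_mul k).const_sub 1
  have h2 : HasDerivAt (fun t => (1 - k * exp t) ^ c)
      ((c * (1 - k * exp s) ^ (c - 1)) * (-(k * exp s))) s := by
    have H := (Real.hasDerivAt_rpow_const (p := c) (Or.inl h)).comp s h1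
    exact H
  have h3 : HasDerivAt (fun t : ℝ => exp (t / 2)) (exp (s / 2) * (1 / 2)) s := by
    simpa using ((hasDerivAt_id' s).div_const 2).exp
  exact h2.mul h3

/-- The isentropic vortex satisfies the steady continuity equation
`∂_x(ρu) + ∂_y(ρv) = 0` at every point of `ℝ²`. -/
theorem isentropic_vortex_continuity (γ ε : ℝ) (hγ : 1 < γ)
    (hε : (γ - 1) * ε^2 * exp 1 < 8 * γ * π^2) (x y : ℝ) :
    deriv (fun x' => vortexRho γ ε x' y * vortexU ε x' y) x
      + deriv (fun y' => vortexRho γ ε x y' * vortexV ε x y') y = 0 := by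
  have hπ := Real.pi_pos
  set k := (γ - 1) * ε ^ 2 / (8 * γ * π ^ 2) with hk
  set c := 1 / (γ - 1) with hc
  have hden : 0 < 8 * γ * π ^ 2 := by positivity
  have hkge : 0 ≤ k := div_nonneg (mul_nonneg (by linarith) (sq_nonneg _)) hden.le
  have hk1 : k * exp 1 < 1 := by
    rw [hk, div_mul_eq_mul_div, div_lt_one hden]; exact hε
  have key : ∀ a b : ℝ, 0 < 1 - k * exp (1 - vortexR2 a b) := by
    intro a b
    have h1 : exp (1 - vortexR2 a b) ≤ exp 1 := by
      apply exp_le_exp.mpr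
      have : 0 ≤ vortexR2 a b := by unfold vortexR2; positivity
      linarith
    have := mul_le_mul_of_nonneg_left h1 hkge
    linarith
  set s := 1 - vortexR2 x y with hs
  have hne : (1 - k * exp s) ≠ 0 := (key x y).ne'
  set d := (c * (1 - k * exp s) ^ (c - 1)) * (-(k * exp s)) * exp (s / 2)
        + (1 - k * exp s) ^ c * (exp (s / 2) * (1 / 2)) with hd
  have hGx : HasDerivAt (fun x' => 1 - vortexR2 x' y) (-(2 * (x - 5))) x := by
    unfold vortexR2
    have : HasDerivAt (fun x' : ℝ => (x' - 5) ^ 2 + (y - 5) ^ 2) (2 * (x - 5)) x := by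
      simpa using (((hasDerivAt_id x).sub_const 5).pow 2).add_const ((y - 5) ^ 2)
    simpa using this.const_sub 1
  have hGy : HasDerivAt (fun y' => 1 - vortexR2 x y') (-(2 * (y - 5))) y := by
    unfold vortexR2
    have : HasDerivAt (fun y' : ℝ => (x - 5) ^ 2 + (y' - 5) ^ 2) (2 * (y - 5)) y := by
      simpa using ((((hasDerivAt_id y).sub_const 5).pow 2).const_add ((x - 5) ^ 2))
    simpa using this.const_sub 1
  have hx1 : HasDerivAt
      (fun x' => (-(ε / (2 * π)) * (y - 5)) *
        ((1 - k * exp (1 - vortexR2 x' y)) ^ c * exp ((1 - vortexR2 x' y) / 2)))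
      ((-(ε / (2 * π)) * (y - 5)) * (d * (-(2 * (x - 5))))) x :=
    ((vortex_aux_hasDerivAt k c s hne).comp x hGx).const_mul _
  have hy1 : HasDerivAt
      (fun y' => ((ε / (2 * π)) * (x - 5)) *
        ((1 - k * exp (1 - vortexR2 x y')) ^ c * exp ((1 - vortexR2 x y') / 2)))
      (((ε / (2 * π)) * (x - 5)) * (d * (-(2 * (y - 5))))) y :=
    ((vortex_aux_hasDerivAt k c s hne).comp y hGy).const_mul _
  have heqx : (fun x' => vortexRho γ ε x' y * vortexU ε x' y)
      = fun x' => (-(ε / (2 * π)) * (y - 5)) *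
        ((1 - k * exp (1 - vortexR2 x' y)) ^ c * exp ((1 - vortexR2 x' y) / 2)) := by
    funext a
    unfold vortexRho vortexU vortexDT
    rw [show (1 : ℝ) + -((γ - 1) * ε ^ 2 / (8 * γ * π ^ 2)) * exp (1 - vortexR2 a y)
        = 1 - k * exp (1 - vortexR2 a y) from by rw [hk]; ring]
    ring
  have heqy : (fun y' => vortexRho γ ε x y' * vortexV ε x y')
      = fun y' => ((ε / (2 * π)) * (x - 5)) *
        ((1 - k * exp (1 - vortexR2 x y')) ^ c * exp ((1 - vortexR2 x y') / 2)) := by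
    funext b
    unfold vortexRho vortexV vortexDT
    rw [show (1 : ℝ) + -((γ - 1) * ε ^ 2 / (8 * γ * π ^ 2)) * exp (1 - vortexR2 x b)
        = 1 - k * exp (1 - vortexR2 x b) from by rw [hk]; ring]
    ring
  rw [heqx, heqy, hx1.deriv, hy1.deriv]
  ring
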